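/- For any nonempty partition λ and any valid Nim move rem(λ) → p, there exists an RIT-move on an odd-numbered row λ → λ̄ such that core(λ̄) = core(λ) and rem(λ̄) = p. -/

import Mathlib

/-- The `j`-th part (0-indexed) of a partition given as a list, `0` beyond the end. -/
def part (l : List ℕ) (j : ℕ) : ℕ := l.getD j 0

/-- A partition: a nonincreasing list of positive integers. -/
def IsPartition (l : List ℕ) : Prop :=
  l.Chain' (· ≥ ·) ∧ ∀ x ∈ l, 0 < x

/-- RIT move: replace the part at (0-indexed) position `i` by a smaller value `v`,
keeping the sequence nonincreasing, then drop the (trailing) zeros. -/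
def RitMove (l l' : List ℕ) : Prop :=
  ∃ i v, i < l.length ∧ v < part l i ∧ (l.set i v).Chain' (· ≥ ·) ∧
    l' = (l.set i v).filter (fun x => x ≠ 0)

/-- RIT move on an odd-numbered row (1-indexed), i.e. an even 0-indexed position. -/
def RitMoveOdd (l l' : List ℕ) : Prop :=
  ∃ i v, i < l.length ∧ i % 2 = 0 ∧ v < part l i ∧ (l.set i v).Chain' (· ≥ ·) ∧
    l' = (l.set i v).filter (fun x => x ≠ 0)

/-- RIT move on an even-numbered row (1-indexed), i.e. an odd 0-indexed position. -/
def RitMoveEven (l l' : List ℕ) : Prop :=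
  ∃ i v, i < l.length ∧ i % 2 = 1 ∧ v < part l i ∧ (l.set i v).Chain' (· ≥ ·) ∧
    l' = (l.set i v).filter (fun x => x ≠ 0)

/-- `core λ = (λ₂, λ₂, λ₄, λ₄, …)` (1-indexed parts), as a `0`-padded sequence. -/
def core (l : List ℕ) : ℕ → ℕ := fun j => part l (2 * (j / 2) + 1)

/-- `rem λ = (λ₁ - λ₂, λ₃ - λ₄, …)` (1-indexed parts), as a `0`-padded sequence. -/
def rem (l : List ℕ) : ℕ → ℕ := fun i => part l (2 * i) - part l (2 * i + 1)

/-- A Nim move strictly decreases exactly one coordinate. -/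
def NimMove (p q : ℕ → ℕ) : Prop := ∃ i, q i < p i ∧ ∀ j, j ≠ i → q j = p j

/-- The nim-sum (bitwise XOR) of the remnant of `l`:
`(λ₁ - λ₂) ⊕ (λ₃ - λ₄) ⊕ ⋯ ⊕ (λ_{2⌈r/2⌉-1} - λ_{2⌈r/2⌉})`. -/
def nimSum (l : List ℕ) : ℕ :=
  (List.ofFn (fun i : Fin ((l.length + 1) / 2) => rem l i)).foldr (· ^^^ ·) 0

/-- The minimal excludant of a set of naturals. -/
noncomputable def mexOf (S : Set ℕ) : ℕ := sInf {n | n ∉ S}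

/-- `G` is the (normal play) Sprague-Grundy function of RIT. -/
def IsRitGrundy (G : List ℕ → ℕ) : Prop :=
  ∀ l, IsPartition l → G l = mexOf {n | ∃ l', RitMove l l' ∧ G l' = n}

/-- `G` is the misère Grundy function of RIT (value `1` at the terminal position). -/
def IsRitMisereGrundy (G : List ℕ → ℕ) : Prop :=
  G [] = 1 ∧ ∀ l, IsPartition l → l ≠ [] →
    G l = mexOf {n | ∃ l', RitMove l l' ∧ G l' = n}

/-- `G` is the misère Grundy function of Nim on `0`-padded sequences of heaps. -/
def IsNimMisereGrundy (G : (ℕ → ℕ) → ℕ) : Prop :=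
  (∀ p : ℕ → ℕ, (∀ i, p i = 0) → G p = 1) ∧
  (∀ p : ℕ → ℕ, (Function.support p).Finite → (∃ i, p i ≠ 0) →
    G p = mexOf {n | ∃ q, NimMove p q ∧ G q = n})

/-- `P` is the set of P-positions of RIT under normal play. -/
def IsRitP (P : List ℕ → Prop) : Prop :=
  ∀ l, IsPartition l → (P l ↔ ∀ l', RitMove l l' → ¬ P l')

/-- every Nim move on the remnant is realized by an odd-row RIT move
preserving the core. -/
lemma part_succ_le (l : List ℕ) (h : l.Chain' (· ≥ ·)) (j : ℕ) :
    part l (j + 1) ≤ part l j := by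
  by_cases hj : j + 1 < l.length
  · simp only [List.Chain'] at h
    rw [List.isChain_iff_getElem] at h
    have := h j (by omega)
    rw [part, part, List.getD_eq_getElem l 0 (by omega : j < l.length),
      List.getD_eq_getElem l 0 hj]
    simpa [List.get_eq_getElem] using this
  · simp [part, List.getD_eq_getElem?_getD, List.getElem?_eq_none (by omega : l.length ≤ j + 1)]

lemma part_le_part (l : List ℕ) (h : l.Chain' (· ≥ ·)) {j k : ℕ} (hjk : j ≤ k) :
    part l k ≤ part l j := by
  induction k with
  | zero =>
    have : j = 0 := by omega
    simp [this]
  | succ k ih =>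
    rcases Nat.lt_or_ge j (k+1) with h' | h'
    · exact le_trans (part_succ_le l h k) (ih (by omega))
    · have : j = k + 1 := by omega
      simp [this]

lemma chain'_of_part (l : List ℕ) (h : ∀ j, part l (j + 1) ≤ part l j) :
    l.Chain' (· ≥ ·) := by
  simp only [List.Chain']
  rw [List.isChain_iff_getElem]
  intro j hj
  have := h j
  rw [part, part, List.getD_eq_getElem l 0 (by omega : j < l.length),
    List.getD_eq_getElem l 0 (by omega : j + 1 < l.length)] at this
  simpa [List.get_eq_getElem] using this

lemma part_filter (l : List ℕ) (h : l.Chain' (· ≥ ·)) :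
    ∀ j, part (l.filter (fun x => x ≠ 0)) j = part l j := by
  induction l with
  | nil => intro j; rfl
  | cons a t ih =>
    intro j
    by_cases ha : a = 0
    · subst ha
      simp only [List.Chain'] at h
      rw [List.isChain_iff_pairwise] at h
      have ht : ∀ x ∈ t, x = 0 := fun x hx =>
        Nat.le_zero.mp ((List.pairwise_cons.mp h).1 x hx)
      have hfil : (0 :: t).filter (fun x => x ≠ 0) = [] := by
        rw [List.filter_eq_nil_iff]
        intro x hx
        rcases List.mem_cons.mp hx with rfl | hx
        · simp
        · simp [ht x hx]
      rw [hfil]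
      cases j with
      | zero => rfl
      | succ j =>
        show 0 = part t j
        by_cases hjt : j < t.length
        · have := ht (t.get ⟨j, hjt⟩) (t.get_mem _)
          simp [part, List.getD_eq_getElem?_getD, List.getElem?_eq_getElem hjt]
          simpa [List.get_eq_getElem] using this.symm
        · simp [part, List.getD_eq_getElem?_getD, List.getElem?_eq_none (by omega : t.length ≤ j)]
    · have hfil : (a :: t).filter (fun x => x ≠ 0) = a :: t.filter (fun x => x ≠ 0) := by
        simp [List.filter_cons, ha]
      rw [hfil]
      cases j with
      | zero => rfl
      | succ j => exact ih h.tail j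

lemma part_set (l : List ℕ) (k : ℕ) (hk : k < l.length) (v : ℕ) (j : ℕ) :
    part (l.set k v) j = if j = k then v else part l j := by
  by_cases hj : j = k
  · subst hj
    simp [part, List.getD_eq_getElem?_getD, List.getElem?_set_eq_of_lt _ hk]
  · simp [part, List.getD_eq_getElem?_getD, List.getElem?_set_ne (Ne.symm hj), hj]

theorem stmt_2 (l : List ℕ) (hl : IsPartition l) (hne : l ≠ []) (p : ℕ → ℕ)
    (h : NimMove (rem l) p) :
    ∃ l', RitMoveOdd l l' ∧ core l' = core l ∧ rem l' = p := by
  obtain ⟨hc, hpos⟩ := hl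
  obtain ⟨i, hlt, heq⟩ := h
  have hba : part l (2*i+1) ≤ part l (2*i) := part_le_part l hc (by omega)
  have hrem : rem l i = part l (2*i) - part l (2*i+1) := rfl
  have hv : part l (2*i+1) + p i < part l (2*i) := by omega
  have h2i : 2*i < l.length := by
    by_contra h'
    have : part l (2*i) = 0 := by
      simp [part, List.getD_eq_getElem?_getD, List.getElem?_eq_none (by omega : l.length ≤ 2*i)]
    omega
  set v := part l (2*i+1) + p i with hvdef
  set l2 := l.set (2*i) v with hl2
  have hpart2 : ∀ j, part l2 j = if j = 2*i then v else part l j :=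
    fun j => part_set l (2*i) h2i v j
  have chain2 : l2.Chain' (· ≥ ·) := by
    apply chain'_of_part
    intro j
    rw [hpart2, hpart2]
    by_cases h1 : j + 1 = 2*i
    · have hj : j ≠ 2*i := by omega
      rw [if_pos h1, if_neg hj]
      have : part l (2*i) ≤ part l j := part_le_part l hc (by omega)
      omega
    · by_cases h2 : j = 2*i
      · rw [if_neg h1, if_pos h2]
        have : part l (j+1) = part l (2*i+1) := by rw [h2]
        omega
      · rw [if_neg h1, if_neg h2]
        exact part_succ_le l hc j
  refine ⟨l2.filter (fun x => x ≠ 0), ⟨2*i, v, h2i, by omega, by omega, chain2, rfl⟩, ?_, ?_⟩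
  · funext j
    unfold core
    rw [part_filter l2 chain2, hpart2, if_neg (by omega)]
  · funext j
    unfold rem
    rw [part_filter l2 chain2, part_filter l2 chain2, hpart2, hpart2,
      if_neg (by omega : ¬ (2*j+1 = 2*i))]
    by_cases hj : j = i
    · subst hj
      rw [if_pos rfl]
      omega
    · rw [if_neg (by omega)]
      exact (heq j hj).symm
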